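/- Let X ∈ ℝ^{I_1×⋯×I_N} be a tensor whose n-th unfolding has rank R_n for n = 1,…,N−1. Then X admits a TT decomposition with TT rank exactly (1, R_1, …, R_{N−1}, 1), i.e., there exist cores G^(n) ∈ ℝ^{R_{n−1}×I_n×R_n} (R_0 = R_N = 1) such that x_{i_1⋯i_N} = G^(1)_{:,i_1,:} ⋯ G^(N)_{:,i_N,:}. -/

import Mathlib

open Matrix

/-- The `n`-th matrix unfolding `X_{[1,…,n; n+1,…,N]}` of an order-`N` tensor. -/
def unfolding {N : ℕ} (I : Fin N → ℕ) (X : ((m : Fin N) → Fin (I m)) → ℝ) (n : ℕ) :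
    Matrix ((m : {m : Fin N // (m : ℕ) < n}) → Fin (I m.1))
      ((m : {m : Fin N // ¬ (m : ℕ) < n}) → Fin (I m.1)) ℝ :=
  Matrix.of fun a b =>
    X (fun m => if h : (m : ℕ) < n then a ⟨m, h⟩ else b ⟨m, h⟩)

namespace TTAux

variable {N : ℕ} (I : Fin N → ℕ) (X : ((m : Fin N) → Fin (I m)) → ℝ)

abbrev Cols (k : ℕ) := (m : {m : Fin N // ¬ (m : ℕ) < k}) → Fin (I m.1)
abbrev Rows (k : ℕ) := (m : {m : Fin N // (m : ℕ) < k}) → Fin (I m.1)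

/-- The row space of the `k`-th unfolding. -/
noncomputable def V (k : ℕ) : Submodule ℝ (Cols I k → ℝ) :=
  LinearMap.range (Matrix.mulVecLin (unfolding I X k)ᵀ)

lemma row_mem (k : ℕ) (a : Rows I k) :
    (fun c => unfolding I X k a c) ∈ V I X k := by
  classical
  refine ⟨Pi.single a 1, ?_⟩
  funext c
  simp [Matrix.mulVecLin_apply, Matrix.mulVec, dotProduct, Pi.single_apply]

/-- Insert index `i` at position `k` in front of a tail `c`. -/
def combine (k : Fin N) (i : Fin (I k)) (c : Cols I ((k : ℕ) + 1)) : Cols I (k : ℕ) :=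
  fun m => if h : (m.1 : ℕ) = (k : ℕ) then
      Fin.cast (congrArg I (Fin.ext h)).symm i
    else c ⟨m.1, by have := m.2; omega⟩

/-- Extend a row multi-index by one more index. -/
def extend (k : Fin N) (a : Rows I (k : ℕ)) (i : Fin (I k)) : Rows I ((k : ℕ) + 1) :=
  fun m => if h : (m.1 : ℕ) < (k : ℕ) then a ⟨m.1, h⟩
    else Fin.cast (congrArg I (Fin.ext (show (m.1 : ℕ) = (k : ℕ) by have := m.2; omega))).symm i

lemma merge_eq (k : Fin N) (a : Rows I (k : ℕ)) (i : Fin (I k)) (c : Cols I ((k : ℕ) + 1)) :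
    ((fun m => if h : (m : ℕ) < (k : ℕ) then a ⟨m, h⟩ else combine I k i c ⟨m, h⟩) :
        (m : Fin N) → Fin (I m))
      = ((fun m => if h : (m : ℕ) < (k : ℕ) + 1 then extend I k a i ⟨m, h⟩ else c ⟨m, h⟩) :
        (m : Fin N) → Fin (I m)) := by
  funext m
  by_cases h1 : (m : ℕ) < (k : ℕ)
  · rw [dif_pos h1, dif_pos (by omega)]
    simp [extend, h1]
  · by_cases h2 : (m : ℕ) = (k : ℕ)
    · rw [dif_neg h1, dif_pos (by omega)]
      simp [combine, extend, h1, h2]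
    · rw [dif_neg h1, dif_neg (by omega)]
      simp [combine, h2]

lemma mem_shift (k : Fin N) (v : Cols I (k : ℕ) → ℝ) (hv : v ∈ V I X (k : ℕ)) (i : Fin (I k)) :
    (fun c => v (combine I k i c)) ∈ V I X ((k : ℕ) + 1) := by
  obtain ⟨w, rfl⟩ := hv
  have key : (fun c => Matrix.mulVecLin (unfolding I X (k : ℕ))ᵀ w (combine I k i c))
      = ∑ a : Rows I (k : ℕ),
          w a • (fun c => unfolding I X ((k : ℕ) + 1) (extend I k a i) c) := by
    funext c
    have harg : ∀ a : Rows I (k : ℕ),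
        unfolding I X (k : ℕ) a (combine I k i c)
          = unfolding I X ((k : ℕ) + 1) (extend I k a i) c := by
      intro a
      show X _ = X _
      exact congrArg X (merge_eq I k a i c)
    simp only [Matrix.mulVecLin_apply, Matrix.mulVec, dotProduct, Matrix.transpose_apply,
      Finset.sum_apply, Pi.smul_apply, smul_eq_mul]
    exact Finset.sum_congr rfl fun a _ => by rw [harg a, mul_comm]
  rw [key]
  exact Submodule.sum_mem _ fun a _ => Submodule.smul_mem _ _ (row_mem I X _ _)

variable (R : Fin (N + 1) → ℕ)
variable (hrank : ∀ n : Fin (N + 1), 1 ≤ (n : ℕ) → (n : ℕ) ≤ N - 1 →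
      (unfolding I X (n : ℕ)).rank = R n)

/-- The family of right factors. -/
noncomputable def Bfam (k : Fin (N + 1)) : Fin (R k) → Cols I (k : ℕ) → ℝ :=
  if h : 1 ≤ (k : ℕ) ∧ (k : ℕ) ≤ N - 1 then
    fun r c => ((Module.finBasisOfFinrankEq ℝ (V I X (k : ℕ))
      (((unfolding I X (k : ℕ)).rank_transpose).trans (hrank k h.1 h.2)) :
        Fin (R k) → V I X (k : ℕ)) r :
        Cols I (k : ℕ) → ℝ) c
  else if h0 : (k : ℕ) = 0 then
    fun _ c => X (fun m => c ⟨m, by omega⟩)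
  else fun _ _ => 1

lemma Bfam_mem_mid (k : Fin (N + 1)) (h1 : 1 ≤ (k : ℕ)) (h2 : (k : ℕ) ≤ N - 1)
    (r : Fin (R k)) : Bfam I X R hrank k r ∈ V I X (k : ℕ) := by
  simp only [Bfam, dif_pos (And.intro h1 h2)]
  exact (Module.finBasisOfFinrankEq ℝ (V I X (k : ℕ)) _ r).2

lemma Bfam_zero (k : Fin (N + 1)) (h0 : (k : ℕ) = 0) (r : Fin (R k)) (c : Cols I (k : ℕ)) :
    Bfam I X R hrank k r c = X (fun m => c ⟨m, by omega⟩) := by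
  have hno : ¬ (1 ≤ (k : ℕ) ∧ (k : ℕ) ≤ N - 1) := by omega
  simp only [Bfam, dif_neg hno, dif_pos h0]

lemma Bfam_mem_zero (k : Fin (N + 1)) (h0 : (k : ℕ) = 0) (r : Fin (R k)) :
    Bfam I X R hrank k r ∈ V I X (k : ℕ) := by
  have ha : ∀ m : {m : Fin N // (m : ℕ) < (k : ℕ)}, False := fun m => by have := m.2; omega
  have he : Bfam I X R hrank k r
      = fun c => unfolding I X (k : ℕ) (fun m => (ha m).elim) c := by
    funext c
    rw [Bfam_zero I X R hrank k h0]
    show X _ = X _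
    refine congrArg X (funext fun m => ?_)
    rw [dif_neg (show ¬ ((m : ℕ) < (k : ℕ)) by omega)]
  rw [he]
  exact row_mem I X _ _

lemma Bfam_repr (k : Fin (N + 1)) (h1 : 1 ≤ (k : ℕ)) (h2 : (k : ℕ) ≤ N - 1)
    (v : Cols I (k : ℕ) → ℝ) (hv : v ∈ V I X (k : ℕ)) :
    ∃ coef : Fin (R k) → ℝ, v = fun c => ∑ s, coef s * Bfam I X R hrank k s c := by
  simp only [Bfam, dif_pos (And.intro h1 h2)]
  set b : Module.Basis (Fin (R k)) ℝ (V I X (k : ℕ)) := Module.finBasisOfFinrankEq ℝ (V I X (k : ℕ))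
    (((unfolding I X (k : ℕ)).rank_transpose).trans (hrank k h1 h2)) with hb
  refine ⟨fun s => b.repr ⟨v, hv⟩ s, ?_⟩
  funext c
  have hv2 : v c = ((∑ s, b.repr ⟨v, hv⟩ s • b s : V I X (k : ℕ)) : Cols I (k : ℕ) → ℝ) c := by
    rw [b.sum_repr ⟨v, hv⟩]
  rw [hv2]
  simp only [Submodule.coe_sum, Submodule.coe_smul, Finset.sum_apply, Pi.smul_apply, smul_eq_mul]

lemma Bfam_last (hN : 0 < N) (k : Fin (N + 1)) (hk : (k : ℕ) = N) (r : Fin (R k))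
    (c : Cols I (k : ℕ)) : Bfam I X R hrank k r c = 1 := by
  have hc1 : ¬ (1 ≤ (k : ℕ) ∧ (k : ℕ) ≤ N - 1) := by omega
  have hc2 : ¬ ((k : ℕ) = 0) := by omega
  simp only [Bfam, dif_neg hc1, dif_neg hc2]

/-- The key step lemma: the cores exist. -/
lemma step (hN : 0 < N) (hRN : R (Fin.last N) = 1) (k : Fin N) :
    ∃ g : Fin (R k.castSucc) → Fin (I k) → Fin (R k.succ) → ℝ,
      ∀ (r : Fin (R k.castSucc)) (i : Fin (I k)) (c : Cols I ((k : ℕ) + 1)),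
        Bfam I X R hrank k.castSucc r (combine I k i c)
          = ∑ s, g r i s * Bfam I X R hrank k.succ s c := by
  have hmem : ∀ r : Fin (R k.castSucc),
      Bfam I X R hrank k.castSucc r ∈ V I X (k : ℕ) := by
    intro r
    by_cases h0 : (k : ℕ) = 0
    · exact Bfam_mem_zero I X R hrank k.castSucc (by rw [Fin.coe_castSucc]; exact h0) r
    · exact Bfam_mem_mid I X R hrank k.castSucc (by rw [Fin.coe_castSucc]; omega)
        (by rw [Fin.coe_castSucc]; have := k.2; omega) r
  by_cases hmid : (k : ℕ) + 1 ≤ N - 1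
  · -- middle case: use the basis representation at level k+1
    have hshift : ∀ (r : Fin (R k.castSucc)) (i : Fin (I k)),
        (fun c => Bfam I X R hrank k.castSucc r (combine I k i c)) ∈ V I X ((k : ℕ) + 1) :=
      fun r i => mem_shift I X k _ (hmem r) i
    choose coef hcoef using fun (r : Fin (R k.castSucc)) (i : Fin (I k)) =>
      Bfam_repr I X R hrank k.succ (by rw [Fin.val_succ]; omega)
        (by rw [Fin.val_succ]; exact hmid) _ (hshift r i)
    exact ⟨coef, fun r i c => congrFun (hcoef r i) c⟩
  · -- last case : k + 1 = N
    have hkN : (k : ℕ) + 1 = N := by have := k.2; omega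
    have hc0 : Cols I ((k : ℕ) + 1) := fun m => absurd (by omega : (m.1 : ℕ) < (k : ℕ) + 1) m.2
    refine ⟨fun r i _ => Bfam I X R hrank k.castSucc r (combine I k i hc0), fun r i c => ?_⟩
    have hcc : c = hc0 := by
      funext m
      exact absurd (show (m.1 : ℕ) < (k : ℕ) + 1 by omega) m.2
    subst hcc
    have hone : ∀ s c', Bfam I X R hrank k.succ s c' = 1 :=
      fun s c' => Bfam_last I X R hrank hN k.succ (by rw [Fin.val_succ]; exact hkN) s c'
    have hcard : R k.succ = 1 := by
      have : k.succ = Fin.last N := Fin.ext (by rw [Fin.val_succ, Fin.val_last]; exact hkN)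
      rw [this, hRN]
    haveI : Unique (Fin (R k.succ)) := by rw [hcard]; exact inferInstance
    rw [Fintype.sum_unique]
    rw [hone, mul_one]

end TTAux

theorem stmt9 (N : ℕ) (hN : 0 < N) (I : Fin N → ℕ) (R : Fin (N + 1) → ℕ)
    (hR0 : R 0 = 1) (hRN : R (Fin.last N) = 1)
    (X : ((m : Fin N) → Fin (I m)) → ℝ)
    (hrank : ∀ n : Fin (N + 1), 1 ≤ (n : ℕ) → (n : ℕ) ≤ N - 1 →
      (unfolding I X (n : ℕ)).rank = R n) :
    ∃ G : (n : Fin N) → Fin (R n.castSucc) → Fin (I n) → Fin (R n.succ) → ℝ,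
      ∀ i, X i = ∑ s : ((m : Fin (N + 1)) → Fin (R m)),
        ∏ n : Fin N, G n (s n.castSucc) (i n) (s n.succ) := by
  classical
  choose G hG using fun k : Fin N => TTAux.step I X R hrank hN hRN k
  refine ⟨G, fun i => ?_⟩
  have hR0' : ∀ j : Fin (N + 1), (j : ℕ) = 0 → R j = 1 := fun j hj => by
    rwa [show j = 0 from Fin.ext (by simp [hj])]
  have key : ∀ k (hk : k ≤ N),
      X i = ∑ q : ((m : Fin (k + 1)) → Fin (R (Fin.castLE (Nat.succ_le_succ hk) m))),
        (∏ n : Fin k, G ⟨n, lt_of_lt_of_le n.2 hk⟩ (q n.castSucc)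
            (i ⟨n, lt_of_lt_of_le n.2 hk⟩) (q n.succ))
          * TTAux.Bfam I X R hrank (Fin.castLE (Nat.succ_le_succ hk) (Fin.last k))
              (q (Fin.last k)) (fun m => i m.1) := by
    intro k
    induction k with
    | zero =>
      intro hk
      have hB : ∀ r, TTAux.Bfam I X R hrank (Fin.castLE (Nat.succ_le_succ hk) (Fin.last 0)) r
          (fun m => i m.1) = X i := by
        intro r
        rw [TTAux.Bfam_zero I X R hrank _ rfl]
      have hcard :
          Fintype.card ((m : Fin 1) → Fin (R (Fin.castLE (Nat.succ_le_succ hk) m))) = 1 := by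
        simp only [Fintype.card_pi, Fin.prod_univ_one, Fintype.card_fin]
        exact hR0' _ (by simp)
      simp only [Fin.prod_univ_zero, one_mul, hB, Finset.sum_const, Finset.card_univ, hcard,
        one_smul]
    | succ k ih =>
      intro hk
      have hkN : k ≤ N := Nat.le_of_succ_le hk
      have hkltN : k < N := hk
      set kF : Fin N := ⟨k, hkltN⟩ with hkF
      rw [ih hkN]
      have hcomb : ((fun m => i m.1) : TTAux.Cols I k)
          = TTAux.combine I kF (i kF) (fun m => i m.1) := by
        funext m
        show i m.1 = _
        unfold TTAux.combine
        by_cases h : (m.1 : ℕ) = (kF : ℕ)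
        · rw [dif_pos h]
          have hm : m.1 = kF := Fin.ext h
          obtain ⟨m1, hm1⟩ := m
          simp only at hm
          subst hm
          rfl
        · rw [dif_neg h]
      have hstep : ∀ q : ((m : Fin (k + 1)) → Fin (R (Fin.castLE (Nat.succ_le_succ hkN) m))),
          TTAux.Bfam I X R hrank (Fin.castLE (Nat.succ_le_succ hkN) (Fin.last k))
              (q (Fin.last k)) (fun m => i m.1)
            = ∑ s : Fin (R kF.succ), G kF (q (Fin.last k)) (i kF) s
                * TTAux.Bfam I X R hrank kF.succ s (fun m => i m.1) := by
        intro q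
        have e1 := hG kF (q (Fin.last k)) (i kF) (fun m => i m.1)
        rw [← hcomb] at e1
        exact e1
      simp only [hstep]
      conv_rhs => rw [← Equiv.sum_comp (Fin.snocEquiv
        (fun m : Fin (k + 2) => Fin (R (Fin.castLE (Nat.succ_le_succ hk) m)))),
        Fintype.sum_prod_type, Finset.sum_comm]
      refine Finset.sum_congr rfl fun q _ => ?_
      rw [Finset.mul_sum]
      refine Finset.sum_congr rfl fun s _ => ?_
      simp only [Fin.snocEquiv_apply, Fin.prod_univ_castSucc, Fin.succ_castSucc,
        Fin.snoc_castSucc, Fin.snoc_last, Fin.succ_last, Fin.coe_castSucc, ← mul_assoc]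
      rfl
  have hfin := key N le_rfl
  have hBtop : ∀ r, TTAux.Bfam I X R hrank (Fin.castLE (Nat.succ_le_succ le_rfl) (Fin.last N)) r
      (fun m => i m.1) = 1 := fun r => TTAux.Bfam_last I X R hrank hN _ rfl r _
  rw [hfin]
  simp only [hBtop, mul_one]
  rfl
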